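/- Let c, c₁, d, t be positive real numbers with t > 2, and let {e_k}_{k=1}^∞ be a sequence of real numbers with |e_k| ≤ c₁kᵈ for all k ≥ 1. Let k₀ be a positive integer such that the sequence W = {c·tᵏ + e_k}_{k=k₀}^∞ is a B̂_∞-sequence of positive reals. Then W has many partition products in the additive semigroup of real numbers; in fact Φ(r) ≥ r − 1 for every positive integer r. -/

import Mathlib

open Filter

/-- `W_r(n)` for a sequence `{w_k}_{k ≥ k₀}` of reals under addition: the set of
sums `w_{k₁} + ⋯ + w_{k_r}` with indices `k₁ ≥ ⋯ ≥ k_r ≥ k₀` and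
`k₁ + ⋯ + k_r ≤ n`. -/
def WrSetAdd (w : ℕ → ℝ) (k₀ r n : ℕ) : Set ℝ :=
  {x : ℝ | ∃ l : List ℕ, l.length = r ∧ (∀ k ∈ l, k₀ ≤ k) ∧ l.sum ≤ n ∧
    List.Pairwise (· ≥ ·) l ∧ x = (l.map w).sum}

/-- `Φ(r) = liminf_{n→∞} (log card W_r(n)) / (log n)`. -/
noncomputable def PhiAdd (w : ℕ → ℝ) (k₀ r : ℕ) : ℝ :=
  Filter.liminf
    (fun n : ℕ => Real.log (Set.ncard (WrSetAdd w k₀ r n)) / Real.log n)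
    Filter.atTop

lemma wr_fin_le (w : ℕ → ℝ) (k₀ r n : ℕ) :
    (WrSetAdd w k₀ r n).Finite ∧ (WrSetAdd w k₀ r n).ncard ≤ (n+1)^r := by
  classical
  set F : (Fin r → Fin (n+1)) → ℝ := fun f => ∑ i, w (f i) with hF
  have hsub : WrSetAdd w k₀ r n ⊆ Set.range F := by
    rintro x ⟨l, hl, hk, hsum, hsort, rfl⟩
    subst hl
    refine ⟨fun i => ⟨l.get i, ?_⟩, ?_⟩
    · have h1 : l.get i ∈ l := List.get_mem l i
      have := List.le_sum_of_mem h1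
      omega
    · simp only [hF]
      conv_rhs => rw [← List.ofFn_get l, List.map_ofFn, List.sum_ofFn]
      rfl
  have hfin : (Set.range F).Finite := Set.finite_range F
  refine ⟨hfin.subset hsub, ?_⟩
  calc (WrSetAdd w k₀ r n).ncard ≤ (Set.range F).ncard :=
        Set.ncard_le_ncard hsub hfin
    _ ≤ (n+1)^r := by
        rw [← Set.image_univ]
        refine le_trans (Set.ncard_image_le Set.finite_univ) ?_
        simp [Set.ncard_univ, Nat.card_eq_fintype_card]

lemma wr_lower (w : ℕ → ℝ) (k₀ r n m : ℕ) (hm : 0 < m)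
    (hfin : (WrSetAdd w k₀ r n).Finite)
    (hB : ∀ I J : Finset ℕ, (∀ i ∈ I, k₀ ≤ i) → (∀ j ∈ J, k₀ ≤ j) →
      ∑ i ∈ I, w i = ∑ j ∈ J, w j → I = J)
    (hsum : r * (k₀ + r * m) ≤ n) :
    m ^ r ≤ (WrSetAdd w k₀ r n).ncard := by
  classical
  set a : (Fin r → Fin m) → Fin r → ℕ := fun g i => k₀ + i * m + g i with ha
  have key : ∀ (g g' : Fin r → Fin m) (i j : Fin r), a g i = a g' j → i = j ∧ (g i : ℕ) = g' j := by
    intro g g' i j h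
    simp only [ha] at h
    have hgi : (g i : ℕ) < m := (g i).isLt
    have hgj : (g' j : ℕ) < m := (g' j).isLt
    have hij : (i : ℕ) = (j : ℕ) := by
      rcases Nat.lt_trichotomy (i : ℕ) (j : ℕ) with hlt | he | hlt
      · exfalso
        have h2 : ((i : ℕ) + 1) * m ≤ (j : ℕ) * m := Nat.mul_le_mul_right m hlt
        rw [Nat.succ_mul] at h2
        omega
      · exact he
      · exfalso
        have h2 : ((j : ℕ) + 1) * m ≤ (i : ℕ) * m := Nat.mul_le_mul_right m hlt
        rw [Nat.succ_mul] at h2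
        omega
    refine ⟨Fin.ext hij, ?_⟩
    rw [hij] at h
    omega
  have ha_inj : ∀ g : Fin r → Fin m, Function.Injective (a g) := by
    intro g i j h
    exact (key g g i j h).1
  set G : (Fin r → Fin m) → ℝ := fun g => ∑ i, w (a g i) with hG
  have hbound : ∀ (g : Fin r → Fin m) (i : Fin r), a g i ≤ k₀ + r * m := by
    intro g i
    have h1 : (i : ℕ) + 1 ≤ r := i.isLt
    have h2 : (g i : ℕ) < m := (g i).isLt
    have h3 : ((i : ℕ) + 1) * m ≤ r * m := Nat.mul_le_mul_right m h1
    rw [Nat.succ_mul] at h3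
    simp only [ha]
    omega
  have hmem : ∀ g, G g ∈ WrSetAdd w k₀ r n := by
    intro g
    refine ⟨(List.ofFn (a g)).reverse, by simp, ?_, ?_, ?_, ?_⟩
    · intro k hk
      simp only [List.mem_reverse, List.mem_ofFn] at hk
      obtain ⟨i, rfl⟩ := hk
      simp only [ha]
      omega
    · rw [List.sum_reverse, List.sum_ofFn]
      calc ∑ i, a g i ≤ ∑ _i : Fin r, (k₀ + r * m) :=
            Finset.sum_le_sum fun i _ => hbound g i
        _ = r * (k₀ + r * m) := by simp [Finset.sum_const, Finset.card_univ, Nat.smul_one_eq_cast]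
        _ ≤ n := hsum
    · rw [List.pairwise_reverse]
      rw [List.pairwise_ofFn]
      intro i j hij
      show a g j ≥ a g i
      have h2 : (g i : ℕ) < m := (g i).isLt
      have h3 : ((i : ℕ) + 1) * m ≤ (j : ℕ) * m := Nat.mul_le_mul_right m hij
      rw [Nat.succ_mul] at h3
      simp only [ha]
      omega
    · rw [List.map_reverse, List.sum_reverse, List.map_ofFn, List.sum_ofFn]
      rfl
  have hGinj : Function.Injective G := by
    intro g g' h
    have hIJ : Finset.image (a g) Finset.univ = Finset.image (a g') Finset.univ := by
      apply hB
      · intro i hi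
        simp only [Finset.mem_image] at hi
        obtain ⟨j, _, rfl⟩ := hi
        simp only [ha]
        omega
      · intro i hi
        simp only [Finset.mem_image] at hi
        obtain ⟨j, _, rfl⟩ := hi
        simp only [ha]
        omega
      · rw [Finset.sum_image (fun x _ y _ hxy => ha_inj g hxy),
          Finset.sum_image (fun x _ y _ hxy => ha_inj g' hxy)]
        exact h
    funext i
    have : a g i ∈ Finset.image (a g') Finset.univ := by
      rw [← hIJ]
      exact Finset.mem_image_of_mem _ (Finset.mem_univ i)
    simp only [Finset.mem_image, Finset.mem_univ, true_and] at this
    obtain ⟨j, hj⟩ := this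
    obtain ⟨hij, hval⟩ := key g' g j i hj
    cases hij
    exact Fin.ext hval.symm
  have hrange : Set.range G ⊆ WrSetAdd w k₀ r n := by
    rintro x ⟨g, rfl⟩; exact hmem g
  calc m ^ r = Nat.card (Fin r → Fin m) := by
        simp [Nat.card_eq_fintype_card]
    _ = Nat.card (Set.range G) := (Nat.card_range_of_injective hGinj).symm
    _ = (Set.range G).ncard := rfl
    _ ≤ (WrSetAdd w k₀ r n).ncard := Set.ncard_le_ncard hrange hfin

/-- let `c, c₁, d, t` be positive reals with `t > 2` and `{e_k}`
reals with `|e_k| ≤ c₁ kᵈ` for `k ≥ 1`.  Let `k₀` be a positive integer such that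
`W = {c tᵏ + e_k}_{k ≥ k₀}` is a `B̂_∞`-sequence of positive reals.  Then `W` has
many partition products in `(ℝ, +)`; in fact `Φ(r) ≥ r - 1` for every `r ≥ 1`. -/
theorem stmt11 (c c₁ d t : ℝ) (hc : 0 < c) (hc₁ : 0 < c₁) (hd : 0 < d)
    (ht : 2 < t) (e : ℕ → ℝ)
    (he : ∀ k : ℕ, 1 ≤ k → |e k| ≤ c₁ * (k : ℝ) ^ d)
    (k₀ : ℕ) (hk₀ : 0 < k₀)
    (hpos : ∀ k, k₀ ≤ k → 0 < c * t ^ k + e k)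
    (hB : ∀ I J : Finset ℕ, (∀ i ∈ I, k₀ ≤ i) → (∀ j ∈ J, k₀ ≤ j) →
      ∑ i ∈ I, (c * t ^ i + e i) = ∑ j ∈ J, (c * t ^ j + e j) → I = J) :
    (∀ r : ℕ, 1 ≤ r →
      (r : ℝ) - 1 ≤ PhiAdd (fun k => c * t ^ k + e k) k₀ r) ∧
    Tendsto (fun r : ℕ => PhiAdd (fun k => c * t ^ k + e k) k₀ r)
      atTop atTop := by
  set w : ℕ → ℝ := fun k => c * t ^ k + e k with hw
  have main : ∀ r : ℕ, 1 ≤ r → (r : ℝ) - 1 ≤ PhiAdd w k₀ r := by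
    intro r hr
    have hr0 : 0 < r := hr
    set f : ℕ → ℝ :=
      fun n : ℕ => Real.log (Set.ncard (WrSetAdd w k₀ r n)) / Real.log n with hf
    have hcb : Filter.IsCoboundedUnder (· ≥ ·) Filter.atTop f := by
      apply Filter.IsBoundedUnder.isCoboundedUnder_ge
      refine ⟨(2 * r : ℝ), ?_⟩
      rw [Filter.eventually_map]
      filter_upwards [Filter.eventually_ge_atTop 2] with n hn
      have hn1 : (1 : ℝ) < (n : ℝ) := by exact_mod_cast hn
      have hlogn : 0 < Real.log n := Real.log_pos hn1
      have hcard := (wr_fin_le w k₀ r n).2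
      have hlog : Real.log (Set.ncard (WrSetAdd w k₀ r n)) ≤ 2 * r * Real.log n := by
        rcases Nat.eq_zero_or_pos (Set.ncard (WrSetAdd w k₀ r n)) with h0 | h1
        · rw [h0]
          simp only [Nat.cast_zero, Real.log_zero]
          positivity
        · have hle : ((Set.ncard (WrSetAdd w k₀ r n) : ℝ)) ≤ ((n : ℝ) ^ 2) ^ r := by
            calc ((Set.ncard (WrSetAdd w k₀ r n) : ℝ)) ≤ (((n+1)^r : ℕ) : ℝ) := by
                  exact_mod_cast hcard
              _ ≤ ((n : ℝ) ^ 2) ^ r := by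
                  push_cast
                  apply pow_le_pow_left₀ (by positivity)
                  have h2 : (2:ℝ) ≤ (n:ℝ) := by exact_mod_cast hn
                  nlinarith [h2, sq_nonneg ((n:ℝ) - 1)]
          calc Real.log (Set.ncard (WrSetAdd w k₀ r n))
              ≤ Real.log (((n : ℝ) ^ 2) ^ r) :=
                Real.log_le_log (by exact_mod_cast h1) hle
            _ = 2 * r * Real.log n := by
                rw [Real.log_pow, Real.log_pow]; ring
      simp only [hf]
      rw [div_le_iff₀ hlogn]
      exact hlog
    have hev : ∀ᶠ n in atTop, (r : ℝ) - 1 ≤ f n := by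
      filter_upwards [Filter.eventually_ge_atTop
          (2*(r*r)*((2*(2*(r*r)))^(r-1) + r + k₀ + 2)),
        Filter.eventually_ge_atTop 2] with n hn hn2
      set q := 2*(r*r) with hq
      have hq0 : 0 < q := by positivity
      set m := n / q with hmdef
      have hmK : (2*q)^(r-1) + r + k₀ + 2 ≤ m := by
        rw [hmdef, Nat.le_div_iff_mul_le hq0, Nat.mul_comm]
        exact hn
      have hm0 : 0 < m := by omega
      have hmq : m * q ≤ n := Nat.div_mul_le_self n q
      have hlt : n < q * (m + 1) := Nat.lt_mul_div_succ n hq0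
      have hn4 : n ≤ 2 * (m * q) := by
        have hqm : q ≤ m * q := Nat.le_mul_of_pos_left q hm0
        have : q * (m + 1) = m * q + q := by ring
        omega
      -- the sum condition
      have hsumc : r * (k₀ + r * m) ≤ n := by
        have h1 : k₀ ≤ r * m := le_trans (by omega) (Nat.le_mul_of_pos_left m hr0)
        calc r * (k₀ + r * m) ≤ r * (r * m + r * m) :=
              Nat.mul_le_mul_left r (by omega)
          _ = q * m := by ring
          _ ≤ n := by rw [Nat.mul_comm q m]; exact hmq
      have hcardN := wr_lower w k₀ r n m hm0 (wr_fin_le w k₀ r n).1 hB hsumc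
      have hpow : n ^ (r-1) ≤ m ^ r := by
        calc n ^ (r-1) ≤ (2 * (m * q)) ^ (r-1) := Nat.pow_le_pow_left hn4 _
          _ = (2*q) ^ (r-1) * m ^ (r-1) := by
              rw [show 2 * (m * q) = (2*q) * m by ring, Nat.mul_pow]
          _ ≤ m * m ^ (r-1) := Nat.mul_le_mul_right _ (by omega)
          _ = m ^ r := by
              rw [← pow_succ']
              congr 1
              omega
      have hn1 : (1 : ℝ) < (n : ℝ) := by exact_mod_cast hn2
      have hlogn : 0 < Real.log n := Real.log_pos hn1
      have hcard' : ((n : ℝ)) ^ (r-1) ≤ ((Set.ncard (WrSetAdd w k₀ r n) : ℝ)) := by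
        exact_mod_cast le_trans hpow hcardN
      simp only [hf]
      rw [le_div_iff₀ hlogn]
      have h1 : Real.log ((n : ℝ) ^ (r-1)) ≤
          Real.log (Set.ncard (WrSetAdd w k₀ r n)) :=
        Real.log_le_log (by positivity) hcard'
      rw [Real.log_pow] at h1
      have hcast : ((r - 1 : ℕ) : ℝ) = (r : ℝ) - 1 := by
        push_cast [Nat.cast_sub hr]
        ring
      rw [hcast] at h1
      exact h1
    exact Filter.le_liminf_of_le hcb hev
  refine ⟨main, ?_⟩
  apply tendsto_atTop_mono' atTop
    (show (fun r : ℕ => (r : ℝ) - 1) ≤ᶠ[atTop] fun r : ℕ => PhiAdd w k₀ r by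
      filter_upwards [Filter.eventually_ge_atTop 1] with r hr using main r hr)
  have : Tendsto (fun r : ℕ => (r : ℝ) + (-1)) atTop atTop :=
    tendsto_atTop_add_const_right atTop (-1) tendsto_natCast_atTop_atTop
  simpa [sub_eq_add_neg] using this
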